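/- Let T be an ℕ-valued random variable and suppose there exist a > 0 and a natural number m ≥ 1 such that P(T ≤ t) ≤ a·t^m for every natural number t. Then E[T] ≥ (m/(m+1)) · a^{−1/m}. -/

import Mathlib

open MeasureTheory
open scoped ENNReal

lemma sum_lb_aux (a : ℝ) (m : ℕ) (ha : 0 < a) (hm : 1 ≤ m) :
    ((m : ℝ) / (m + 1)) * a ^ (-(1 / (m : ℝ))) ≤
      ∑ t ∈ Finset.range ⌈a ^ (-(1 / (m : ℝ)))⌉₊, max 0 (1 - a * (t : ℝ) ^ m) := by
  set c : ℝ := a ^ (-(1 / (m : ℝ))) with hc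
  have hm0 : (m : ℝ) ≠ 0 := Nat.cast_ne_zero.mpr (by omega)
  have hcpos : 0 < c := Real.rpow_pos_of_pos ha _
  have hcm : a * c ^ m = 1 := by
    rw [hc, ← Real.rpow_natCast (a ^ (-(1 / (m : ℝ)))) m, ← Real.rpow_mul ha.le]
    rw [neg_mul, one_div, inv_mul_cancel₀ hm0, Real.rpow_neg_one]
    field_simp
  set N : ℕ := ⌈c⌉₊ with hN
  have hcN : c ≤ (N : ℝ) := Nat.le_ceil c
  set g : ℝ → ℝ := fun x => max 0 (1 - a * x ^ m) with hg
  have hganti : AntitoneOn g (Set.Icc (0 : ℝ) (0 + N)) := by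
    intro x hx y hy hxy
    exact max_le_max le_rfl (by nlinarith [pow_le_pow_left₀ hx.1 hxy m])
  have hcont : Continuous g := continuous_const.max (by continuity)
  have key := hganti.integral_le_sum
  simp only [zero_add] at key
  refine le_trans ?_ key
  have hsplit : ∫ x in (0:ℝ)..(N:ℝ), g x
      = (∫ x in (0:ℝ)..c, g x) + ∫ x in c..(N:ℝ), g x :=
    (intervalIntegral.integral_add_adjacent_intervals
      (hcont.intervalIntegrable _ _) (hcont.intervalIntegrable _ _)).symm
  have h2 : 0 ≤ ∫ x in c..(N:ℝ), g x :=
    intervalIntegral.integral_nonneg hcN (fun x _ => le_max_left _ _)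
  have h3 : (∫ x in (0:ℝ)..c, g x) = ∫ x in (0:ℝ)..c, (1 - a * x ^ m) := by
    apply intervalIntegral.integral_congr
    intro x hx
    rw [Set.uIcc_of_le hcpos.le] at hx
    have : a * x ^ m ≤ 1 := by
      calc a * x ^ m ≤ a * c ^ m := by
            exact mul_le_mul_of_nonneg_left (pow_le_pow_left₀ hx.1 hx.2 m) ha.le
        _ = 1 := hcm
    exact max_eq_right (by linarith)
  have h4 : (∫ x in (0:ℝ)..c, (1 - a * x ^ m)) = c - a * (c ^ (m + 1) / (m + 1)) := by
    rw [intervalIntegral.integral_sub (f := fun _ => (1:ℝ)) (g := fun x => a * x ^ m)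
      (by exact intervalIntegrable_const)
      (by exact (continuous_const.mul (continuous_pow m)).intervalIntegrable _ _)]
    rw [intervalIntegral.integral_const, intervalIntegral.integral_const_mul,
      integral_pow]
    simp only [smul_eq_mul, mul_one, hc, one_div]
    push_cast
    ring
  have h5 : c - a * (c ^ (m + 1) / (m + 1)) = ((m : ℝ) / (m + 1)) * c := by
    have : a * c ^ (m + 1) = c := by rw [pow_succ, ← mul_assoc, hcm, one_mul]
    field_simp
    nlinarith [this]
  rw [hsplit, h3, h4, h5]
  linarith

/-- If `T` is an `ℕ`-valued random variable with `P(T ≤ t) ≤ a·t^m` for all `t : ℕ`,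
where `a > 0` and `m ≥ 1`, then `E[T] ≥ (m/(m+1)) · a^{−1/m}`. -/
theorem mean_lower_bound_of_cdf_poly (Ω : Type*) [MeasurableSpace Ω] (μ : Measure Ω)
    [IsProbabilityMeasure μ] (T : Ω → ℕ) (hT : Measurable T)
    (a : ℝ) (m : ℕ) (ha : 0 < a) (hm : 1 ≤ m)
    (htail : ∀ t : ℕ, (μ {ω | T ω ≤ t}).toReal ≤ a * (t : ℝ) ^ m) :
    ENNReal.ofReal (((m : ℝ) / (m + 1)) * a ^ (-(1 / (m : ℝ)))) ≤
      ∫⁻ ω, (T ω : ℝ≥0∞) ∂μ := by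
  set N : ℕ := ⌈a ^ (-(1 / (m : ℝ)))⌉₊ with hN
  have hmle : ∀ t : ℕ, MeasurableSet {ω | t < T ω} :=
    fun t => hT measurableSet_Ioi
  -- step 1: sum of tail measures ≤ lintegral
  have step1 : ∑ t ∈ Finset.range N, μ {ω | t < T ω} ≤ ∫⁻ ω, (T ω : ℝ≥0∞) ∂μ := by
    calc ∑ t ∈ Finset.range N, μ {ω | t < T ω}
        = ∑ t ∈ Finset.range N, ∫⁻ ω, Set.indicator {ω | t < T ω} (1 : Ω → ℝ≥0∞) ω ∂μ := by
          refine Finset.sum_congr rfl fun t _ => ?_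
          exact (lintegral_indicator_one (hmle t)).symm
      _ = ∫⁻ ω, ∑ t ∈ Finset.range N, Set.indicator {ω | t < T ω} (1 : Ω → ℝ≥0∞) ω ∂μ := by
          rw [lintegral_finset_sum]
          exact fun t _ => (measurable_const.indicator (hmle t))
      _ ≤ ∫⁻ ω, (T ω : ℝ≥0∞) ∂μ := by
          refine lintegral_mono fun ω => ?_
          simp only [Set.indicator_apply, Set.mem_setOf_eq, Pi.one_apply]
          rw [Finset.sum_boole]
          have : (Finset.range N).filter (fun t => t < T ω) ⊆ Finset.range (T ω) := by
            intro t ht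
            simp only [Finset.mem_filter, Finset.mem_range] at ht ⊢
            exact ht.2
          have hcard := Finset.card_le_card this
          rw [Finset.card_range] at hcard
          exact_mod_cast Nat.cast_le.mpr hcard
  -- step 2: each tail measure ≥ ofReal (max 0 (1 - a t^m))
  have step2 : ∀ t : ℕ, ENNReal.ofReal (max 0 (1 - a * (t:ℝ)^m)) ≤ μ {ω | t < T ω} := by
    intro t
    rw [ENNReal.ofReal_le_iff_le_toReal (measure_ne_top μ _)]
    refine max_le ENNReal.toReal_nonneg ?_
    have hcompl : {ω | t < T ω} = {ω | T ω ≤ t}ᶜ := by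
      ext ω; simp [not_le]
    have hmc : MeasurableSet {ω | T ω ≤ t} := hT measurableSet_Iic
    rw [hcompl, measure_compl hmc (measure_ne_top μ _), measure_univ,
      ENNReal.toReal_sub_of_le prob_le_one ENNReal.one_ne_top]
    simp only [ENNReal.toReal_one]
    linarith [htail t]
  -- combine
  refine le_trans ?_ step1
  calc ENNReal.ofReal (((m : ℝ) / (m + 1)) * a ^ (-(1 / (m : ℝ))))
      ≤ ENNReal.ofReal (∑ t ∈ Finset.range N, max 0 (1 - a * (t:ℝ)^m)) :=
        ENNReal.ofReal_le_ofReal (sum_lb_aux a m ha hm)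
    _ = ∑ t ∈ Finset.range N, ENNReal.ofReal (max 0 (1 - a * (t:ℝ)^m)) :=
        ENNReal.ofReal_sum_of_nonneg (fun t _ => le_max_left _ _)
    _ ≤ ∑ t ∈ Finset.range N, μ {ω | t < T ω} :=
        Finset.sum_le_sum fun t _ => step2 t
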